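/- Let H, K be finite-dimensional complex Hilbert spaces and T a map from density operators of the form ρ_φ = (φ,·)φ (φ a unit vector in H) to positive trace-class operators on K. Suppose that for every self-adjoint operator A on K there exists a self-adjoint operator τ(A) on H with Tr(A · Tρ_φ) = (φ, τ(A)φ) for all unit vectors φ. Then T extends to a linear map on the span of the rank-one projections: explicitly, there exist operators L_{pq} on H, with L_{pq}* = L_{qp}, such that Tρ_φ = Σ_{p,q} Tr(L_{pq} ρ_φ) (k_q,·)k_p for any orthonormal basis (k_p) of K. -/

import Mathlib

open scoped ComplexConjugate

/-- The rank-one operator `(e,·)e : f ↦ ⟪e, f⟫ e`. -/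
noncomputable def rankOne {H : Type*} [NormedAddCommGroup H] [InnerProductSpace ℂ H]
    (e : H) : H →ₗ[ℂ] H where
  toFun f := (inner ℂ e f : ℂ) • e
  map_add' x y := by simp [inner_add_right, add_smul]
  map_smul' c x := by simp [inner_smul_right, smul_smul]

/-- A positive operator: `⟪f, D f⟫ ≥ 0` (in particular real) for all `f`. -/
def IsPosOp {H : Type*} [NormedAddCommGroup H] [InnerProductSpace ℂ H]
    (D : H →ₗ[ℂ] H) : Prop :=
  ∀ f : H, 0 ≤ (inner ℂ f (D f) : ℂ).re ∧ (inner ℂ f (D f) : ℂ).im = 0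

/-- The rank-one operator `(a,·)b : f ↦ ⟪a, f⟫ b`. -/
noncomputable def rankOne2 {K : Type*} [NormedAddCommGroup K] [InnerProductSpace ℂ K]
    (a b : K) : K →ₗ[ℂ] K where
  toFun f := (inner ℂ a f : ℂ) • b
  map_add' x y := by simp [inner_add_right, add_smul]
  map_smul' c x := by simp [inner_smul_right, smul_smul]

section helpers
variable {E : Type*} [NormedAddCommGroup E] [InnerProductSpace ℂ E]

local notation "⟪" x ", " y "⟫" => @inner ℂ _ _ x y

lemma rankOne2_apply (a b x : E) : rankOne2 a b x = ⟪a, x⟫ • b := rfl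

lemma rankOne_eq (a : E) : rankOne a = rankOne2 a a := rfl

lemma comp_rankOne2 (A : E →ₗ[ℂ] E) (a b : E) :
    A ∘ₗ rankOne2 a b = rankOne2 a (A b) := by
  ext x; simp [rankOne2_apply, map_smul]

lemma rankOne2_adj (a b x y : E) : ⟪rankOne2 a b x, y⟫ = ⟪x, rankOne2 b a y⟫ := by
  simp only [rankOne2_apply, inner_smul_left, inner_smul_right, inner_conj_symm]
  ring

lemma trace_rankOne2 [FiniteDimensional ℂ E] (a b : E) :
    LinearMap.trace ℂ E (rankOne2 a b) = ⟪a, b⟫ := by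
  let e := stdOrthonormalBasis ℂ E
  rw [LinearMap.trace_eq_matrix_trace ℂ e.toBasis]
  rw [Matrix.trace]
  simp only [Matrix.diag_apply, LinearMap.toMatrix_apply, e.coe_toBasis,
    e.coe_toBasis_repr_apply, e.repr_apply_apply, rankOne2_apply, inner_smul_right]
  rw [← e.sum_inner_mul_inner a b]

lemma trace_comp_rankOne [FiniteDimensional ℂ E] (B : E →ₗ[ℂ] E) (φ : E) :
    LinearMap.trace ℂ E (B ∘ₗ rankOne φ) = ⟪φ, B φ⟫ := by
  have h : B ∘ₗ rankOne φ = rankOne2 φ (B φ) := by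
    ext x; simp [rankOne_eq, rankOne2_apply, map_smul]
  rw [h, trace_rankOne2]

lemma onb_expansion [FiniteDimensional ℂ E] {ι : Type*} [Fintype ι]
    (e : OrthonormalBasis ι ℂ E) (B : E →ₗ[ℂ] E) :
    B = ∑ p, ∑ q, ⟪e p, B (e q)⟫ • rankOne2 (e q) (e p) := by
  ext x
  conv_lhs => rw [← e.sum_repr' x, map_sum]
  simp only [LinearMap.sum_apply]
  rw [Finset.sum_comm]
  refine Finset.sum_congr rfl fun q _ => ?_
  rw [map_smul]
  conv_lhs => rw [← e.sum_repr' (B (e q))]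
  rw [Finset.smul_sum]
  refine Finset.sum_congr rfl fun p _ => ?_
  simp [rankOne2_apply, smul_smul, mul_comm]

lemma ext_of_unit (L1 L2 : E →ₗ[ℂ] E)
    (h : ∀ φ : E, ‖φ‖ = 1 → ⟪φ, L1 φ⟫ = ⟪φ, L2 φ⟫) : L1 = L2 := by
  rw [← ext_inner_map]
  intro x
  rcases eq_or_ne x 0 with rfl | hx
  · simp
  · set φ := (‖x‖ : ℂ)⁻¹ • x with hφdef
    have hn : ‖φ‖ = 1 := by
      simp [hφdef, norm_smul, norm_ne_zero_iff.mpr hx, inv_mul_cancel₀]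
    have hx' : x = (‖x‖ : ℂ) • φ := by
      rw [hφdef, smul_smul, mul_inv_cancel₀ (by exact_mod_cast norm_ne_zero_iff.mpr hx), one_smul]
    have key := h φ hn
    have e1 : ⟪x, L1 x⟫ = ⟪x, L2 x⟫ := by
      conv_lhs => rw [hx']
      conv_rhs => rw [hx']
      simp only [map_smul, inner_smul_left, inner_smul_right, key]
    calc ⟪L1 x, x⟫ = conj ⟪x, L1 x⟫ := (inner_conj_symm _ _).symm
      _ = conj ⟪x, L2 x⟫ := by rw [e1]
      _ = ⟪L2 x, x⟫ := inner_conj_symm _ _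

end helpers

section main
local notation "⟪" x ", " y "⟫" => @inner ℂ _ _ x y

theorem stmt6 {H K : Type*}
    [NormedAddCommGroup H] [InnerProductSpace ℂ H] [FiniteDimensional ℂ H]
    [NormedAddCommGroup K] [InnerProductSpace ℂ K] [FiniteDimensional ℂ K]
    (T : H → (K →ₗ[ℂ] K))
    (hpos : ∀ φ : H, ‖φ‖ = 1 → IsPosOp (T φ))
    (htr : ∀ φ : H, ‖φ‖ = 1 → LinearMap.trace ℂ K (T φ) = 1)
    (hτ : ∀ A : K →ₗ[ℂ] K, A.IsSymmetric →
      ∃ τA : H →ₗ[ℂ] H, τA.IsSymmetric ∧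
        ∀ φ : H, ‖φ‖ = 1 → LinearMap.trace ℂ K (A ∘ₗ T φ) = (inner ℂ φ (τA φ) : ℂ)) :
    ∀ k : Fin (Module.finrank ℂ K) → K, Orthonormal ℂ k →
      Submodule.span ℂ (Set.range k) = ⊤ →
      ∃ L : Fin (Module.finrank ℂ K) → Fin (Module.finrank ℂ K) → (H →ₗ[ℂ] H),
        (∀ p q, ∀ x y : H, (inner ℂ (L p q x) y : ℂ) = (inner ℂ x (L q p y) : ℂ)) ∧
        ∀ φ : H, ‖φ‖ = 1 →
          T φ = ∑ p, ∑ q,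
            (LinearMap.trace ℂ H (L p q ∘ₗ rankOne φ)) • rankOne2 (k q) (k p) := by
  intro k hk hspan
  have hspan' : ⊤ ≤ Submodule.span ℂ (Set.range k) := hspan.ge
  let e : OrthonormalBasis (Fin (Module.finrank ℂ K)) ℂ K := OrthonormalBasis.mk hk hspan'
  have he : ∀ i, e i = k i := fun i => congrFun (OrthonormalBasis.coe_mk hk hspan') i
  -- T φ is symmetric
  have hsymT : ∀ φ : H, ‖φ‖ = 1 → (T φ).IsSymmetric := by
    intro φ hφ
    rw [LinearMap.isSymmetric_iff_inner_map_self_real]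
    intro v
    have h := hpos φ hφ v
    have hz : conj (⟪v, T φ v⟫ : ℂ) = ⟪v, T φ v⟫ := Complex.conj_eq_iff_im.mpr h.2
    rw [← inner_conj_symm (T φ v) v, hz, hz]
  -- symmetric test operators
  have hA1 : ∀ p q : Fin (Module.finrank ℂ K),
      (rankOne2 (k p) (k q) + rankOne2 (k q) (k p)).IsSymmetric := by
    intro p q x y
    simp only [LinearMap.add_apply, inner_add_left, inner_add_right, rankOne2_adj]
    ring
  have hA2 : ∀ p q : Fin (Module.finrank ℂ K),
      ((Complex.I : ℂ) • (rankOne2 (k p) (k q) - rankOne2 (k q) (k p))).IsSymmetric := by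
    intro p q x y
    simp only [LinearMap.smul_apply, LinearMap.sub_apply, inner_smul_left, inner_smul_right,
      inner_sub_left, inner_sub_right, rankOne2_adj, Complex.conj_I]
    ring
  set L : Fin (Module.finrank ℂ K) → Fin (Module.finrank ℂ K) → (H →ₗ[ℂ] H) :=
    fun p q => (2 : ℂ)⁻¹ • ((hτ _ (hA1 p q)).choose - Complex.I • (hτ _ (hA2 p q)).choose)
    with hL
  -- traces of test operators against T φ
  have t1 : ∀ (p q) (φ : H), ‖φ‖ = 1 →
      LinearMap.trace ℂ K ((rankOne2 (k p) (k q) + rankOne2 (k q) (k p)) ∘ₗ T φ)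
        = ⟪k p, T φ (k q)⟫ + ⟪k q, T φ (k p)⟫ := by
    intro p q φ hφ
    rw [LinearMap.trace_comp_comm', LinearMap.comp_add, map_add,
      comp_rankOne2, comp_rankOne2, trace_rankOne2, trace_rankOne2]
  have t2 : ∀ (p q) (φ : H), ‖φ‖ = 1 →
      LinearMap.trace ℂ K (((Complex.I : ℂ) • (rankOne2 (k p) (k q) - rankOne2 (k q) (k p))) ∘ₗ T φ)
        = Complex.I * (⟪k p, T φ (k q)⟫ - ⟪k q, T φ (k p)⟫) := by
    intro p q φ hφ
    rw [LinearMap.trace_comp_comm', LinearMap.comp_smul, LinearMap.comp_sub, map_smul, map_sub,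
      comp_rankOne2, comp_rankOne2, trace_rankOne2, trace_rankOne2, smul_eq_mul]
  -- key quadratic form identity
  have key : ∀ (p q) (φ : H), ‖φ‖ = 1 → ⟪φ, L p q φ⟫ = ⟪k p, T φ (k q)⟫ := by
    intro p q φ hφ
    have h1 := (hτ _ (hA1 p q)).choose_spec.2 φ hφ
    have h2 := (hτ _ (hA2 p q)).choose_spec.2 φ hφ
    rw [t1 p q φ hφ] at h1
    rw [t2 p q φ hφ] at h2
    have : ⟪φ, L p q φ⟫
        = (2 : ℂ)⁻¹ * (⟪φ, (hτ _ (hA1 p q)).choose φ⟫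
            - Complex.I * ⟪φ, (hτ _ (hA2 p q)).choose φ⟫) := by
      simp [hL, LinearMap.smul_apply, LinearMap.sub_apply, inner_smul_right, inner_sub_right]
    rw [this, ← h1, ← h2]
    linear_combination (-(2 : ℂ)⁻¹ * (⟪k p, T φ (k q)⟫ - ⟪k q, T φ (k p)⟫)) * Complex.I_sq
  refine ⟨L, ?_, ?_⟩
  · -- symmetry L p q ↦ L q p
    have hadj : ∀ p q, LinearMap.adjoint (L p q) = L q p := by
      intro p q
      apply ext_of_unit
      intro φ hφ
      rw [LinearMap.adjoint_inner_right, ← inner_conj_symm (L p q φ) φ, key p q φ hφ,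
        key q p φ hφ, inner_conj_symm]
      exact hsymT φ hφ (k q) (k p)
    intro p q x y
    rw [← hadj p q, LinearMap.adjoint_inner_right]
  · intro φ hφ
    have hc : ∀ p q, LinearMap.trace ℂ H (L p q ∘ₗ rankOne φ) = ⟪k p, T φ (k q)⟫ := by
      intro p q; rw [trace_comp_rankOne, key p q φ hφ]
    simp only [hc, ← he]
    exact onb_expansion e (T φ)


end main
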